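/- Every 4×4 unitary matrix U admits a factorization U = K₁ · e^{izI₄} · e^{iwH̃} · K₂, where z, w are real numbers, H̃ := diag(3, −1, −1, 3), I₄ is the 4×4 identity, and K₁, K₂ belong to the group G := {K ∈ U(4) : K J Kᵀ = J}, with J the 4×4 matrix having J(1,4) = 1, J(2,3) = −1, J(3,2) = 1, J(4,1) = −1 and all other entries zero. -/

import Mathlib

open Matrix Complex NormedSpace

noncomputable section

/-- The 4×4 matrix J with J(1,4)=1, J(2,3)=−1, J(3,2)=1, J(4,1)=−1. -/
def J4 : Matrix (Fin 4) (Fin 4) ℂ := !![0,0,0,1; 0,0,-1,0; 0,1,0,0; -1,0,0,0]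

/-- H̃ = diag(3,−1,−1,3), the Ising coupling H_zz on the symmetric sector. -/
def Htilde : Matrix (Fin 4) (Fin 4) ℂ := Matrix.diagonal ![3, -1, -1, 3]

lemma J4_mul_J4 : J4 * J4 = -1 := by
  ext i j
  fin_cases i <;> fin_cases j <;>
    simp [J4, Matrix.mul_apply, Fin.sum_univ_four, Matrix.one_apply, Matrix.vecHead, Matrix.vecTail]

lemma J4_transpose : J4ᵀ = -J4 := by
  ext i j
  fin_cases i <;> fin_cases j <;> simp [J4, Matrix.vecHead, Matrix.vecTail]

lemma J4_conjTranspose : J4ᴴ = -J4 := by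
  ext i j
  fin_cases i <;> fin_cases j <;> simp [J4, Matrix.vecHead, Matrix.vecTail]

/-- the antiunitary quaternionic structure -/
def theta (v : Fin 4 → ℂ) : Fin 4 → ℂ := J4 *ᵥ (star v)

lemma theta_theta (v : Fin 4 → ℂ) : theta (theta v) = -v := by
  funext i
  fin_cases i <;>
    simp [theta, J4, mulVec, dotProduct, Fin.sum_univ_four, Matrix.vecHead, Matrix.vecTail]

lemma theta_dot (x y : Fin 4 → ℂ) : star (theta x) ⬝ᵥ theta y = star y ⬝ᵥ x := by
  simp [theta, J4, mulVec, dotProduct, Fin.sum_univ_four, Matrix.vecHead, Matrix.vecTail]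
  ring

lemma theta_smul (a : ℂ) (v : Fin 4 → ℂ) : theta (a • v) = star a • theta v := by
  unfold theta
  rw [star_smul, mulVec_smul]

lemma theta_self_orth (v : Fin 4 → ℂ) : star v ⬝ᵥ theta v = 0 := by
  simp [theta, J4, mulVec, dotProduct, Fin.sum_univ_four, Matrix.vecHead, Matrix.vecTail]
  ring

lemma dot_star_self (v : Fin 4 → ℂ) (hv : v ≠ 0) :
    ∃ R : ℝ, 0 < R ∧ star v ⬝ᵥ v = (R : ℂ) := by
  refine ⟨∑ i, Complex.normSq (v i), ?_, ?_⟩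
  · rcases (Finset.sum_nonneg fun i (_ : i ∈ Finset.univ) =>
      Complex.normSq_nonneg (v i)).lt_or_eq with h | h
    · exact h
    · exfalso
      apply hv
      funext i
      have h0 := (Finset.sum_eq_zero_iff_of_nonneg
        (fun i (_ : i ∈ Finset.univ) => Complex.normSq_nonneg (v i))).mp h.symm i
        (Finset.mem_univ i)
      exact Complex.normSq_eq_zero.mp h0
  · simp only [dotProduct, Pi.star_apply, RCLike.star_def]
    push_cast
    exact Finset.sum_congr rfl fun i _ => Complex.normSq_eq_conj_mul_self.symm

lemma exists_unit_scale (v : Fin 4 → ℂ) (hv : v ≠ 0) :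
    ∃ t : ℂ, t ≠ 0 ∧ star (t • v) ⬝ᵥ (t • v) = 1 := by
  obtain ⟨R, hRpos, hs⟩ := dot_star_self v hv
  refine ⟨((Real.sqrt R)⁻¹ : ℝ), ?_, ?_⟩
  · simpa [Real.sqrt_eq_zero', hRpos.le] using hRpos.ne'
  · rw [star_smul, smul_dotProduct, dotProduct_smul, hs]
    rw [smul_eq_mul, smul_eq_mul, ← mul_assoc]
    rw [RCLike.star_def, Complex.conj_ofReal]
    norm_cast
    rw [← mul_inv, Real.mul_self_sqrt hRpos.le, inv_mul_cancel₀ hRpos.ne']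

lemma adj_eig {N : Matrix (Fin 4) (Fin 4) ℂ} (h : Nᴴ * N = 1) {c : ℂ}
    (hc : star c * c = 1) {x : Fin 4 → ℂ} (hx : N *ᵥ x = c • x) :
    Nᴴ *ᵥ x = star c • x := by
  have h2 : Nᴴ *ᵥ (N *ᵥ x) = x := by rw [mulVec_mulVec, h, one_mulVec]
  rw [hx, mulVec_smul] at h2
  calc Nᴴ *ᵥ x = (star c * c) • (Nᴴ *ᵥ x) := by rw [hc, one_smul]
  _ = star c • x := by rw [mul_smul, h2]

lemma eig_unit {N : Matrix (Fin 4) (Fin 4) ℂ} (h : Nᴴ * N = 1) {c : ℂ}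
    {x : Fin 4 → ℂ} (hx0 : x ≠ 0) (hx : N *ᵥ x = c • x) : star c * c = 1 := by
  have key : star (N *ᵥ x) ⬝ᵥ (N *ᵥ x) = star x ⬝ᵥ x := by
    rw [star_mulVec, dotProduct_mulVec, vecMul_vecMul, h, vecMul_one]
  rw [hx, star_smul, smul_dotProduct, dotProduct_smul, smul_eq_mul, smul_eq_mul,
    ← mul_assoc] at key
  obtain ⟨R, hRpos, hs⟩ := dot_star_self x hx0
  rw [hs] at key
  have hRne : (R : ℂ) ≠ 0 := by exact_mod_cast hRpos.ne'
  calc star c * c = star c * c * R * R⁻¹ := by rw [Complex.ofReal_inv, mul_inv_cancel_right₀ hRne]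
  _ = R * R⁻¹ := by rw [key]
  _ = 1 := by rw [Complex.ofReal_inv, mul_inv_cancel₀ hRne]

lemma ct_t (A : Matrix (Fin 4) (Fin 4) ℂ) : (Aᵀ)ᴴ = (Aᴴ)ᵀ := by
  ext i j; simp

set_option maxHeartbeats 2000000 in
/-- every 4×4 unitary U factors as U = K₁·e^{izI₄}·e^{iwH̃}·K₂ with
z, w real and K₁, K₂ in the group {K ∈ U(4) : K J Kᵀ = J} (conjugate to Sp(2)). -/
theorem statement15 (U : Matrix (Fin 4) (Fin 4) ℂ)
    (hU : U ∈ Matrix.unitaryGroup (Fin 4) ℂ) :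
    ∃ (z w : ℝ) (K1 K2 : Matrix (Fin 4) (Fin 4) ℂ),
      K1 ∈ Matrix.unitaryGroup (Fin 4) ℂ ∧ K1 * J4 * K1ᵀ = J4 ∧
      K2 ∈ Matrix.unitaryGroup (Fin 4) ℂ ∧ K2 * J4 * K2ᵀ = J4 ∧
      U = K1 * NormedSpace.exp ((Complex.I * (z : ℂ)) • (1 : Matrix (Fin 4) (Fin 4) ℂ))
            * NormedSpace.exp ((Complex.I * (w : ℂ)) • Htilde) * K2 := by
  have hU1 : Uᴴ * U = 1 := by
    have := (Unitary.mem_iff.mp hU).1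
    rwa [Matrix.star_eq_conjTranspose] at this
  have hU2 : U * Uᴴ = 1 := by
    have := (Unitary.mem_iff.mp hU).2
    rwa [Matrix.star_eq_conjTranspose] at this
  have hU1' : ∀ X, Uᴴ * (U * X) = X := fun X => by rw [← mul_assoc, hU1, one_mul]
  have hUT : (Uᴴ)ᵀ * Uᵀ = 1 := by rw [← Matrix.transpose_mul, hU2, Matrix.transpose_one]
  have hUT' : ∀ X, (Uᴴ)ᵀ * (Uᵀ * X) = X := fun X => by rw [← mul_assoc, hUT, one_mul]
  have hJ' : ∀ X : Matrix (Fin 4) (Fin 4) ℂ, J4 * (J4 * X) = -X := fun X => by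
    rw [← mul_assoc, J4_mul_J4, neg_one_mul]
  set N : Matrix (Fin 4) (Fin 4) ℂ := -(U * J4 * Uᵀ * J4) with hNdef
  have hNJ : N * J4 = U * J4 * Uᵀ := by
    simp only [hNdef, Matrix.neg_mul, Matrix.mul_assoc, J4_mul_J4, Matrix.mul_neg,
      Matrix.mul_one, neg_neg]
  have hNsym : N * J4 = J4 * Nᵀ := by
    rw [hNJ, hNdef]
    simp only [Matrix.transpose_neg, Matrix.transpose_mul, J4_transpose,
      Matrix.transpose_transpose, Matrix.neg_mul, Matrix.mul_neg, neg_neg,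
      Matrix.mul_assoc, hJ']
  have hNunit : Nᴴ * N = 1 := by
    simp only [hNdef, Matrix.conjTranspose_neg, Matrix.conjTranspose_mul,
      J4_conjTranspose, ct_t, Matrix.neg_mul, Matrix.mul_neg, neg_neg,
      Matrix.mul_assoc, hU1', hJ', hUT', J4_mul_J4]
  have thetaEig : ∀ (e : ℂ) (x : Fin 4 → ℂ), star e * e = 1 → N *ᵥ x = e • x →
      N *ᵥ theta x = e • theta x := by
    intro e x he hx
    have hadj : Nᴴ *ᵥ x = star e • x := adj_eig hNunit he hx
    have h1 : N *ᵥ theta x = J4 *ᵥ (Nᵀ *ᵥ star x) := by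
      unfold theta
      rw [mulVec_mulVec, hNsym, ← mulVec_mulVec]
    have h2 : Nᵀ *ᵥ star x = star (Nᴴ *ᵥ x) := by
      rw [star_mulVec, Matrix.conjTranspose_conjTranspose, ← mulVec_transpose]
    rw [h1, h2, hadj, star_smul, star_star, mulVec_smul]
    rfl
  -- first eigenvector
  obtain ⟨c, hc⟩ := Module.End.exists_eigenvalue (Matrix.mulVecLin N)
  obtain ⟨v1, hv1⟩ := hc.exists_hasEigenvector
  have hv1e : N *ᵥ v1 = c • v1 := by
    have := hv1.apply_eq_smul
    rwa [Matrix.mulVecLin_apply] at this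
  have hcu : star c * c = 1 := eig_unit hNunit hv1.right hv1e
  obtain ⟨t1, ht1, hk1n⟩ := exists_unit_scale v1 hv1.right
  set k1 : Fin 4 → ℂ := t1 • v1 with hk1def
  have hk1e : N *ᵥ k1 = c • k1 := by
    rw [hk1def, mulVec_smul, hv1e, smul_comm]
  have hk1a : Nᴴ *ᵥ k1 = star c • k1 := adj_eig hNunit hcu hk1e
  set k4 : Fin 4 → ℂ := -theta k1 with hk4def
  have hk4e : N *ᵥ k4 = c • k4 := by
    rw [hk4def, Matrix.mulVec_neg, thetaEig c k1 hcu hk1e, smul_neg]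
  have hk4a : Nᴴ *ᵥ k4 = star c • k4 := adj_eig hNunit hcu hk4e
  have d11 : star k1 ⬝ᵥ k1 = 1 := hk1n
  have d14 : star k1 ⬝ᵥ k4 = 0 := by rw [hk4def, dotProduct_neg, theta_self_orth, neg_zero]
  have d44 : star k4 ⬝ᵥ k4 = 1 := by
    rw [hk4def, star_neg, neg_dotProduct, dotProduct_neg, neg_neg, theta_dot, hk1n]
  have d41 : star k4 ⬝ᵥ k1 = 0 := by rw [star_dotProduct, d14, star_zero]
  -- the invariant subspace
  let f1 : (Fin 4 → ℂ) →ₗ[ℂ] ℂ :=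
    { toFun := fun x => star k1 ⬝ᵥ x
      map_add' := fun x y => dotProduct_add _ _ _
      map_smul' := fun m x => dotProduct_smul m _ x }
  let f4 : (Fin 4 → ℂ) →ₗ[ℂ] ℂ :=
    { toFun := fun x => star k4 ⬝ᵥ x
      map_add' := fun x y => dotProduct_add _ _ _
      map_smul' := fun m x => dotProduct_smul m _ x }
  let g := f1.prod f4
  let W := LinearMap.ker g
  have hmemW : ∀ x : Fin 4 → ℂ, x ∈ W ↔ star k1 ⬝ᵥ x = 0 ∧ star k4 ⬝ᵥ x = 0 := by
    intro x
    constructor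
    · intro hx
      have := (LinearMap.mem_ker).mp hx
      exact ⟨congrArg Prod.fst this, congrArg Prod.snd this⟩
    · intro ⟨h1, h2⟩
      exact (LinearMap.mem_ker).mpr (Prod.ext h1 h2)
  have hrank : 0 < Module.finrank ℂ W := by
    show 0 < Module.finrank ℂ (LinearMap.ker g)
    have h := g.finrank_range_add_finrank_ker
    have h4 : Module.finrank ℂ (Fin 4 → ℂ) = 4 := Module.finrank_fin_fun ℂ
    have hr : Module.finrank ℂ (LinearMap.range g) ≤ 2 := by
      have h2 := Submodule.finrank_le (LinearMap.range g)
      have : Module.finrank ℂ (ℂ × ℂ) = 2 := by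
        rw [Module.finrank_prod, Module.finrank_self]
      omega
    omega
  haveI : Nontrivial W := Module.nontrivial_of_finrank_pos hrank
  have hNW : ∀ x ∈ W, (Matrix.mulVecLin N) x ∈ W := by
    intro x hx
    obtain ⟨hx1, hx4⟩ := (hmemW x).mp hx
    rw [Matrix.mulVecLin_apply, hmemW]
    constructor
    · calc star k1 ⬝ᵥ (N *ᵥ x) = (star k1 ᵥ* N) ⬝ᵥ x := dotProduct_mulVec _ _ _
      _ = star (Nᴴ *ᵥ k1) ⬝ᵥ x := by rw [star_mulVec, Matrix.conjTranspose_conjTranspose]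
      _ = (c • star k1) ⬝ᵥ x := by rw [hk1a, star_smul, star_star]
      _ = c * (star k1 ⬝ᵥ x) := smul_dotProduct _ _ _
      _ = 0 := by rw [hx1, mul_zero]
    · calc star k4 ⬝ᵥ (N *ᵥ x) = (star k4 ᵥ* N) ⬝ᵥ x := dotProduct_mulVec _ _ _
      _ = star (Nᴴ *ᵥ k4) ⬝ᵥ x := by rw [star_mulVec, Matrix.conjTranspose_conjTranspose]
      _ = (c • star k4) ⬝ᵥ x := by rw [hk4a, star_smul, star_star]
      _ = c * (star k4 ⬝ᵥ x) := smul_dotProduct _ _ _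
      _ = 0 := by rw [hx4, mul_zero]
  obtain ⟨d, hd⟩ := Module.End.exists_eigenvalue ((Matrix.mulVecLin N).restrict hNW)
  obtain ⟨v2', hv2⟩ := hd.exists_hasEigenvector
  have hv2e : N *ᵥ (v2' : Fin 4 → ℂ) = d • (v2' : Fin 4 → ℂ) := by
    have h := hv2.apply_eq_smul
    have h2 := congrArg (Subtype.val) h
    rw [LinearMap.restrict_coe_apply, Matrix.mulVecLin_apply] at h2
    exact h2
  have hv2ne : (v2' : Fin 4 → ℂ) ≠ 0 := fun h => hv2.right (Submodule.coe_eq_zero.mp h)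
  have hdu : star d * d = 1 := eig_unit hNunit hv2ne hv2e
  obtain ⟨t2, ht2, hk2n⟩ := exists_unit_scale _ hv2ne
  set k2 : Fin 4 → ℂ := t2 • (v2' : Fin 4 → ℂ) with hk2def
  have hk2e : N *ᵥ k2 = d • k2 := by
    rw [hk2def, mulVec_smul, hv2e, smul_comm]
  set k3 : Fin 4 → ℂ := theta k2 with hk3def
  have hk3e : N *ᵥ k3 = d • k3 := thetaEig d k2 hdu hk2e
  have d22 : star k2 ⬝ᵥ k2 = 1 := hk2n
  have d33 : star k3 ⬝ᵥ k3 = 1 := by rw [hk3def, theta_dot, hk2n]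
  have d23 : star k2 ⬝ᵥ k3 = 0 := theta_self_orth k2
  have d32 : star k3 ⬝ᵥ k2 = 0 := by rw [star_dotProduct, d23, star_zero]
  have hWv2 := (hmemW _).mp v2'.2
  have d12 : star k1 ⬝ᵥ k2 = 0 := by
    rw [hk2def, dotProduct_smul, hWv2.1, smul_zero]
  have d42 : star k4 ⬝ᵥ k2 = 0 := by
    rw [hk2def, dotProduct_smul, hWv2.2, smul_zero]
  have d21 : star k2 ⬝ᵥ k1 = 0 := by rw [star_dotProduct, d12, star_zero]
  have d24 : star k2 ⬝ᵥ k4 = 0 := by rw [star_dotProduct, d42, star_zero]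
  have hth4 : theta k4 = k1 := by
    rw [hk4def, (show -theta k1 = (-1 : ℂ) • theta k1 by simp), theta_smul, theta_theta]
    simp
  have d13 : star k1 ⬝ᵥ k3 = 0 := by
    rw [hk3def, ← hth4, theta_dot, d24]
  have d43 : star k4 ⬝ᵥ k3 = 0 := by
    rw [hk3def, hk4def, star_neg, neg_dotProduct, theta_dot, d21, neg_zero]
  have d31 : star k3 ⬝ᵥ k1 = 0 := by rw [star_dotProduct, d13, star_zero]
  have d34 : star k3 ⬝ᵥ k4 = 0 := by rw [star_dotProduct, d43, star_zero]
  -- the symplectic-unitary diagonalizer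
  set K : Matrix (Fin 4) (Fin 4) ℂ := Matrix.of (fun i j => ![k1, k2, k3, k4] j i) with hKdef
  have hKcol : ∀ i j : Fin 4, (Kᴴ * K) i j
      = star (![k1,k2,k3,k4] i) ⬝ᵥ (![k1,k2,k3,k4] j) := by
    intro i j
    rw [Matrix.mul_apply]
    simp [hKdef, dotProduct, Matrix.conjTranspose_apply]
  have hKK : Kᴴ * K = 1 := by
    ext i j
    rw [hKcol]
    fin_cases i <;> fin_cases j <;>
      simp only [Matrix.cons_val_zero, Matrix.cons_val_one, Matrix.cons_val_two,
        Matrix.head_cons, Matrix.tail_cons, Matrix.cons_val_fin_one, Matrix.cons_val_succ,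
        Matrix.vecHead, Matrix.vecTail, Fin.isValue, Function.comp_apply, Fin.succ,
        Matrix.one_apply, if_true, if_false] <;>
      norm_num <;>
      first
      | exact d11 | exact d12 | exact d13 | exact d14
      | exact d21 | exact d22 | exact d23 | exact d24
      | exact d31 | exact d32 | exact d33 | exact d34
      | exact d41 | exact d42 | exact d43 | exact d44
  have hKKt : K * Kᴴ = 1 := mul_eq_one_comm.mp hKK
  have hJK : J4 * Kᵀ = Kᴴ * J4 := by
    ext i j
    rw [Matrix.mul_apply, Matrix.mul_apply]
    fin_cases i <;> fin_cases j <;>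
      simp [hKdef, J4, Fin.sum_univ_four, Matrix.conjTranspose_apply, hk4def, hk3def,
        theta, mulVec, dotProduct, Matrix.vecHead, Matrix.vecTail] <;> ring
  have hKJ : K * J4 * Kᵀ = J4 := by
    rw [Matrix.mul_assoc, hJK, ← Matrix.mul_assoc, hKKt, one_mul]
  set E : Matrix (Fin 4) (Fin 4) ℂ := Matrix.diagonal ![c, d, d, c] with hEdef
  have hNK : N * K = K * E := by
    ext i j
    have h1 := congrFun hk1e i
    have h2 := congrFun hk2e i
    have h3 := congrFun hk3e i
    have h4 := congrFun hk4e i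
    simp only [mulVec, dotProduct, Fin.sum_univ_four, Pi.smul_apply, smul_eq_mul] at h1 h2 h3 h4
    rw [Matrix.mul_apply, Matrix.mul_apply]
    fin_cases j
    · simp [hKdef, hEdef, Fin.sum_univ_four, Matrix.diagonal]
      linear_combination h1
    · simp [hKdef, hEdef, Fin.sum_univ_four, Matrix.diagonal]
      linear_combination h2
    · simp [hKdef, hEdef, Fin.sum_univ_four, Matrix.diagonal]
      linear_combination h3
    · simp [hKdef, hEdef, Fin.sum_univ_four, Matrix.diagonal]
      linear_combination h4
  have hKN : Kᴴ * N = E * Kᴴ := by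
    have h : Kᴴ * (N * K) * Kᴴ = Kᴴ * (K * E) * Kᴴ := by rw [hNK]
    calc Kᴴ * N = Kᴴ * N * (K * Kᴴ) := by rw [hKKt, mul_one]
    _ = Kᴴ * (N * K) * Kᴴ := by rw [← Matrix.mul_assoc, ← Matrix.mul_assoc]
    _ = Kᴴ * (K * E) * Kᴴ := h
    _ = (Kᴴ * K) * E * Kᴴ := by rw [← Matrix.mul_assoc]
    _ = E * Kᴴ := by rw [hKK, one_mul]
  -- unit-modulus eigenvalues as exponentials
  have habsc : ‖c‖ = 1 := by
    have hnsq : Complex.normSq c = 1 := by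
      have h := Complex.normSq_eq_conj_mul_self (z := c)
      rw [← RCLike.star_def, hcu] at h
      exact_mod_cast h
    rw [Complex.norm_def, hnsq, Real.sqrt_one]
  have habsd : ‖d‖ = 1 := by
    have hnsq : Complex.normSq d = 1 := by
      have h := Complex.normSq_eq_conj_mul_self (z := d)
      rw [← RCLike.star_def, hdu] at h
      exact_mod_cast h
    rw [Complex.norm_def, hnsq, Real.sqrt_one]
  have hcexp : Complex.exp (↑c.arg * I) = c := by
    have h := Complex.norm_mul_exp_arg_mul_I c
    rwa [habsc, Complex.ofReal_one, one_mul] at h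
  have hdexp : Complex.exp (↑d.arg * I) = d := by
    have h := Complex.norm_mul_exp_arg_mul_I d
    rwa [habsd, Complex.ofReal_one, one_mul] at h
  set z : ℝ := (c.arg + 3 * d.arg) / 8 with hzdef
  set w : ℝ := (c.arg - d.arg) / 8 with hwdef
  set a : ℂ := Complex.exp (I * ↑z + I * ↑w * 3) with hadef
  set b : ℂ := Complex.exp (I * ↑z + -(I * ↑w)) with hbdef
  have ha2 : a * a = c := by
    rw [hadef, ← Complex.exp_add, ← hcexp]
    congr 1
    rw [hzdef, hwdef]
    push_cast
    ring
  have hb2 : b * b = d := by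
    rw [hbdef, ← Complex.exp_add, ← hdexp]
    congr 1
    rw [hzdef, hwdef]
    push_cast
    ring
  have hsa : star a * a = 1 := by
    rw [hadef, RCLike.star_def, ← Complex.exp_conj, ← Complex.exp_add,
      (show (starRingEnd ℂ) (I * ↑z + I * ↑w * 3) + (I * ↑z + I * ↑w * 3) = 0 by
        simp [_root_.map_add, _root_.map_mul, _root_.map_ofNat, Complex.conj_I,
          Complex.conj_ofReal]
        ring), Complex.exp_zero]
  have hsb : star b * b = 1 := by
    rw [hbdef, RCLike.star_def, ← Complex.exp_conj, ← Complex.exp_add,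
      (show (starRingEnd ℂ) (I * ↑z + -(I * ↑w)) + (I * ↑z + -(I * ↑w)) = 0 by
        simp [_root_.map_add, _root_.map_mul, _root_.map_neg, Complex.conj_I, Complex.conj_ofReal]
        ring), Complex.exp_zero]
  have hsa' : (starRingEnd ℂ) a * a = 1 := by rw [← RCLike.star_def]; exact hsa
  have hsb' : (starRingEnd ℂ) b * b = 1 := by rw [← RCLike.star_def]; exact hsb
  set Dd : Matrix (Fin 4) (Fin 4) ℂ := Matrix.diagonal ![a, b, b, a] with hDddef
  set Dinv : Matrix (Fin 4) (Fin 4) ℂ :=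
    Matrix.diagonal ![star a, star b, star b, star a] with hDinvdef
  have hexpD : NormedSpace.exp ((I * (z : ℂ)) • (1 : Matrix (Fin 4) (Fin 4) ℂ))
      * NormedSpace.exp ((I * (w : ℂ)) • Htilde) = Dd := by
    have h1 : (I * (z : ℂ)) • (1 : Matrix (Fin 4) (Fin 4) ℂ)
        = Matrix.diagonal (fun _ => I * (z : ℂ)) := by
      ext i j
      by_cases h : i = j <;>
        simp [Matrix.diagonal, Matrix.one_apply, Matrix.smul_apply, h]
    have h2 : (I * (w : ℂ)) • Htilde
        = Matrix.diagonal ![I * ↑w * 3, -(I * ↑w), -(I * ↑w), I * ↑w * 3] := by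
      ext i j
      rw [Htilde]
      fin_cases i <;> fin_cases j <;>
        simp [Matrix.diagonal, Matrix.smul_apply] <;> ring
    rw [h1, h2, Matrix.exp_diagonal, Matrix.exp_diagonal, Matrix.diagonal_mul_diagonal, hDddef]
    congr 1
    funext i
    fin_cases i <;>
      simp only [Pi.exp_def, ← Complex.exp_eq_exp_ℂ, Pi.mul_apply, ← Complex.exp_add,
        Matrix.cons_val_zero, Matrix.cons_val_one, Matrix.cons_val_two, Matrix.head_cons,
        Matrix.tail_cons, Matrix.cons_val_three, hadef, hbdef] <;> rfl
  have hDdDinv : Dd * Dinv = 1 := by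
    have ha' : a * (starRingEnd ℂ) a = 1 := by rw [mul_comm, ← RCLike.star_def]; exact hsa
    have hb' : b * (starRingEnd ℂ) b = 1 := by rw [mul_comm, ← RCLike.star_def]; exact hsb
    rw [hDddef, hDinvdef, Matrix.diagonal_mul_diagonal]
    ext i j
    fin_cases i <;> fin_cases j <;>
      simp [Matrix.diagonal, Matrix.one_apply, ha', hb']
  have hDinvH : Dinvᴴ = Dd := by
    rw [hDinvdef, Matrix.diagonal_conjTranspose, hDddef]
    ext i j
    fin_cases i <;> fin_cases j <;> simp [Matrix.diagonal, Complex.conj_conj]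
  have hDdX : ∀ X, Dd * (Dinv * X) = X := fun X => by
    rw [← Matrix.mul_assoc, hDdDinv, one_mul]
  have hKX : ∀ X, K * (Kᴴ * X) = X := fun X => by
    rw [← Matrix.mul_assoc, hKKt, one_mul]
  have hUJU : ∀ X, U * (J4 * (Uᵀ * X)) = N * (J4 * X) := fun X => by
    rw [← Matrix.mul_assoc, ← Matrix.mul_assoc, ← hNJ, Matrix.mul_assoc]
  have hKNX : ∀ X, Kᴴ * (N * X) = E * (Kᴴ * X) := fun X => by
    rw [← Matrix.mul_assoc, hKN, Matrix.mul_assoc]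
  have hJKX : ∀ X, Kᴴ * (J4 * X) = J4 * (Kᵀ * X) := fun X => by
    rw [← Matrix.mul_assoc, ← hJK, Matrix.mul_assoc]
  have hKtX : ∀ X, Kᵀ * (Kᴴᵀ * X) = X := fun X => by
    rw [← Matrix.mul_assoc, ← Matrix.transpose_mul, hKK, Matrix.transpose_one, one_mul]
  set K2 : Matrix (Fin 4) (Fin 4) ℂ := Dinv * Kᴴ * U with hK2def
  refine ⟨z, w, K, K2, ?_, hKJ, ?_, ?_, ?_⟩
  · rw [Matrix.mem_unitaryGroup_iff', Matrix.star_eq_conjTranspose]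
    exact hKK
  · rw [Matrix.mem_unitaryGroup_iff', hK2def]
    simp only [Matrix.star_eq_conjTranspose, Matrix.conjTranspose_mul,
      Matrix.conjTranspose_conjTranspose, hDinvH, Matrix.mul_assoc]
    rw [hDdX, hKX, hU1]
  · rw [hK2def]
    simp only [Matrix.transpose_mul, Matrix.diagonal_transpose, hDinvdef]
    rw [← hDinvdef]
    simp only [Matrix.mul_assoc]
    rw [hUJU, hKNX, hJKX, hKtX]
    ext i j
    fin_cases i <;> fin_cases j <;>
      simp [hDinvdef, hEdef, J4, Matrix.mul_apply, Matrix.diagonal, Fin.sum_univ_four,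
        Matrix.vecHead, Matrix.vecTail,
        (show Fin.succ (2 : Fin 3) = (3 : Fin 4) by decide),
        (show Fin.succ (0 : Fin 3) = (1 : Fin 4) by decide),
        (show Fin.succ (1 : Fin 3) = (2 : Fin 4) by decide)] <;>
      first
      | rfl
      | (intro h; exact absurd h (by decide))
      | (rw [← ha2]
         first
         | linear_combination ((starRingEnd ℂ) a * a + 1) * hsa'
         | linear_combination (-((starRingEnd ℂ) a * a) - 1) * hsa')
      | (rw [← hb2]
         first
         | linear_combination ((starRingEnd ℂ) b * b + 1) * hsb'
         | linear_combination (-((starRingEnd ℂ) b * b) - 1) * hsb')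
  · rw [Matrix.mul_assoc K, hexpD, hK2def]
    simp only [Matrix.mul_assoc]
    rw [hDdX, hKX]
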